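/- Fix an integer ℓ ≥ 0. Assume the γ-strong C-order and the β_ℓ-ℓ-weak P-order assumptions hold for some γ ≥ 0 and β_ℓ ≥ 0. Then every C-side ℓ-Greedy-Local matching M' satisfies w(M) ≤ max{1+γ, β_ℓ+γ}·w(M') for every matching M of the instance. -/
import Mathlib


/-- A matching of a bipartite instance with edge set `E ⊆ P × C`. -/
def IsBipMatching {s q : ℕ} (E M : Finset (Fin s × Fin q)) : Prop :=
  M ⊆ E ∧ ∀ e₁ ∈ M, ∀ e₂ ∈ M, e₁ ≠ e₂ → e₁.1 ≠ e₂.1 ∧ e₁.2 ≠ e₂.2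

/-- The γ-strong C-order assumption. -/
def StrongCOrder {s q : ℕ} (E : Finset (Fin s × Fin q)) (w : Fin s × Fin q → ℝ)
    (γ : ℝ) : Prop :=
  ∀ i j : Fin q, i < j → ∀ p : Fin s, (p, i) ∈ E → (p, j) ∈ E → w (p, j) ≤ γ * w (p, i)

/-- The βℓ-ℓ-weak P-order assumption: the bound is only required when at least ℓ other
neighbors of `c` lie strictly between `p_i` and `p_j` in P-order. -/
def WeakPOrder {s q : ℕ} (E : Finset (Fin s × Fin q)) (w : Fin s × Fin q → ℝ)
    (ℓ : ℕ) (βℓ : ℝ) : Prop :=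
  ∀ i j : Fin s, i < j → ∀ c : Fin q, (i, c) ∈ E → (j, c) ∈ E →
    ℓ ≤ (Finset.univ.filter (fun x : Fin s => i < x ∧ x < j ∧ (x, c) ∈ E)).card →
    w (j, c) ≤ βℓ * w (i, c)

/-- `availSetC E M' j` = the set `B_j` of P-vertices `p` with `(p, c_j) ∈ E` that are not
blocked by an edge `(p, c_i) ∈ M'` with `i < j`. -/
def availSetC {s q : ℕ} (E M' : Finset (Fin s × Fin q)) (j : Fin q) : Finset (Fin s) :=
  Finset.univ.filter (fun p : Fin s => (p, j) ∈ E ∧ ∀ i : Fin q, i < j → (p, i) ∉ M')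

/-- `firstAvailC E M' ℓ j` = the set `F'_j` of the min(ℓ+1, |B_j|) first elements of `B_j`
in P-order (those with at most ℓ smaller elements of `B_j`). -/
def firstAvailC {s q : ℕ} (E M' : Finset (Fin s × Fin q)) (ℓ : ℕ) (j : Fin q) :
    Finset (Fin s) :=
  (availSetC E M' j).filter
    (fun p : Fin s => ((availSetC E M' j).filter (fun p' : Fin s => p' < p)).card ≤ ℓ)

/-- A C-side ℓ-Greedy-Local matching: a matching `M'` such that whenever `B_j ≠ ∅`, `c_j` is
matched to a maximum-weight edge among `F'_j` (the ℓ+1 first still-available P-neighbors),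
and whenever `B_j = ∅`, `c_j` is unmatched. -/
def CGreedyLocalL {s q : ℕ} (E : Finset (Fin s × Fin q)) (w : Fin s × Fin q → ℝ) (ℓ : ℕ)
    (M' : Finset (Fin s × Fin q)) : Prop :=
  IsBipMatching E M' ∧ ∀ j : Fin q,
    ((availSetC E M' j).Nonempty →
      ∃ p ∈ firstAvailC E M' ℓ j, (p, j) ∈ M' ∧
        ∀ p' ∈ firstAvailC E M' ℓ j, w (p', j) ≤ w (p, j)) ∧
    (availSetC E M' j = ∅ → ∀ p : Fin s, (p, j) ∉ M')

lemma charge_le {α : Type*} [DecidableEq α] (t t' : Finset α) (w : α → ℝ)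
    (c : ℝ) (hc : 0 ≤ c) (hw' : ∀ e ∈ t', 0 ≤ w e)
    (f : α → α) (hmem : ∀ e ∈ t, f e ∈ t') (hle : ∀ e ∈ t, w e ≤ c * w (f e))
    (hinj : ∀ a ∈ t, ∀ b ∈ t, f a = f b → a = b) :
    ∑ e ∈ t, w e ≤ c * ∑ e ∈ t', w e := by
  calc ∑ e ∈ t, w e ≤ ∑ e ∈ t, c * w (f e) := Finset.sum_le_sum hle
    _ = c * ∑ e ∈ t, w (f e) := (Finset.mul_sum _ _ _).symm
    _ = c * ∑ e' ∈ t.image f, w e' := by rw [Finset.sum_image hinj]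
    _ ≤ c * ∑ e' ∈ t', w e' :=
      mul_le_mul_of_nonneg_left
        (Finset.sum_le_sum_of_subset_of_nonneg (Finset.image_subset_iff.mpr hmem)
          (fun e he _ => hw' e he)) hc

lemma low_elem {s q : ℕ} {E M' : Finset (Fin s × Fin q)} {w : Fin s × Fin q → ℝ}
    {ℓ : ℕ} {βℓ : ℝ} (hordP : WeakPOrder E w ℓ βℓ)
    {j : Fin q} {p : Fin s} (hB : p ∈ availSetC E M' j)
    (hF : p ∉ firstAvailC E M' ℓ j) :
    ∃ p₀ ∈ firstAvailC E M' ℓ j, w (p, j) ≤ βℓ * w (p₀, j) := by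
  classical
  set B := availSetC E M' j with hBdef
  have hne : B.Nonempty := ⟨p, hB⟩
  set p₀ := B.min' hne with hp₀def
  have hp₀B : p₀ ∈ B := B.min'_mem hne
  have hp₀F : p₀ ∈ firstAvailC E M' ℓ j := by
    rw [firstAvailC, Finset.mem_filter]
    refine ⟨hp₀B, ?_⟩
    have : (B.filter (fun p' : Fin s => p' < p₀)) = ∅ := by
      apply Finset.filter_eq_empty_iff.mpr
      intro x hx
      exact not_lt.mpr (B.min'_le x hx)
    rw [← hBdef, this]
    simp
  have hcard : ℓ + 1 ≤ (B.filter (fun p' : Fin s => p' < p)).card := by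
    by_contra hcon
    apply hF
    rw [firstAvailC, Finset.mem_filter]
    refine ⟨hB, ?_⟩
    rw [← hBdef]
    omega
  have hp₀p : p₀ < p := by
    rcases lt_or_eq_of_le (B.min'_le p hB) with h | h
    · exact h
    · exact absurd (h ▸ hp₀F) hF
  have hEp : (p, j) ∈ E := (Finset.mem_filter.mp hB).2.1
  have hEp₀ : (p₀, j) ∈ E := (Finset.mem_filter.mp hp₀B).2.1
  refine ⟨p₀, hp₀F, ?_⟩
  apply hordP p₀ p hp₀p j hEp₀ hEp
  have hsub : (B.filter (fun p' : Fin s => p' < p)).erase p₀ ⊆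
      Finset.univ.filter (fun x : Fin s => p₀ < x ∧ x < p ∧ (x, j) ∈ E) := by
    intro x hx
    rw [Finset.mem_erase, Finset.mem_filter] at hx
    obtain ⟨hxne, hxB, hxp⟩ := hx
    refine Finset.mem_filter.mpr ⟨Finset.mem_univ _, ?_, hxp, (Finset.mem_filter.mp hxB).2.1⟩
    exact lt_of_le_of_ne (B.min'_le x hxB) (Ne.symm hxne)
  have hcard2 := Finset.card_le_card hsub
  have hcard3 : ((B.filter (fun p' : Fin s => p' < p)).erase p₀).card + 1
      = (B.filter (fun p' : Fin s => p' < p)).card := by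
    apply Finset.card_erase_add_one
    exact Finset.mem_filter.mpr ⟨hp₀B, hp₀p⟩
  omega

/-- Under the γ-strong C-order and βℓ-ℓ-weak P-order assumptions,
the C-side ℓ-Greedy-Local algorithm is max{1+γ, βℓ+γ}-approximate. -/
theorem stmt11 {s q : ℕ} (ℓ : ℕ) (E : Finset (Fin s × Fin q)) (w : Fin s × Fin q → ℝ)
    (hw : ∀ e ∈ E, 0 < w e) (γ βℓ : ℝ) (hγ : 0 ≤ γ) (hβ : 0 ≤ βℓ)
    (hordC : StrongCOrder E w γ) (hordP : WeakPOrder E w ℓ βℓ)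
    (M' : Finset (Fin s × Fin q)) (hM' : CGreedyLocalL E w ℓ M')
    (M : Finset (Fin s × Fin q)) (hM : IsBipMatching E M) :
    ∑ e ∈ M, w e ≤ max (1 + γ) (βℓ + γ) * ∑ e ∈ M', w e := by
  classical
  obtain ⟨⟨hM'E, hM'm⟩, hgreedy⟩ := hM'
  obtain ⟨hME, hMm⟩ := hM
  have hw' : ∀ e ∈ M', 0 ≤ w e := fun e he => (hw e (hM'E he)).le
  set pred : Fin s × Fin q → Prop := fun e => ∃ i, i < e.2 ∧ (e.1, i) ∈ M' with hpred
  set M1 := M.filter pred with hM1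
  set M2 := M.filter (fun e => ¬ pred e) with hM2
  -- charging function for blocked edges
  set f1 : Fin s × Fin q → Fin s × Fin q := fun e =>
    if h : ∃ i, i < e.2 ∧ (e.1, i) ∈ M' then (e.1, h.choose) else e with hf1
  have hf1spec : ∀ e ∈ M1, f1 e ∈ M' ∧ (f1 e).1 = e.1 ∧ w e ≤ γ * w (f1 e) := by
    intro e he
    rw [hM1, Finset.mem_filter] at he
    obtain ⟨heM, hep⟩ := he
    have hval : f1 e = (e.1, hep.choose) := dif_pos hep
    obtain ⟨hlt, hmem⟩ := hep.choose_spec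
    rw [hval]
    refine ⟨hmem, rfl, ?_⟩
    have hEe : (e.1, e.2) ∈ E := by rw [Prod.mk.eta]; exact hME heM
    have := hordC hep.choose e.2 hlt e.1 (hM'E hmem) hEe
    rw [Prod.mk.eta] at this
    exact this
  have hf1inj : ∀ a ∈ M1, ∀ b ∈ M1, f1 a = f1 b → a = b := by
    intro a ha b hb hab
    by_contra hne
    have h1 := (hf1spec a ha).2.1
    have h2 := (hf1spec b hb).2.1
    have : a.1 = b.1 := by rw [← h1, ← h2, hab]
    rw [hM1, Finset.mem_filter] at ha hb
    exact (hMm a ha.1 b hb.1 hne).1 this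
  have hsum1 : ∑ e ∈ M1, w e ≤ γ * ∑ e ∈ M', w e :=
    charge_le M1 M' w γ hγ hw' f1 (fun e he => (hf1spec e he).1)
      (fun e he => (hf1spec e he).2.2) hf1inj
  -- charging function for available edges
  set f2 : Fin s × Fin q → Fin s × Fin q := fun e =>
    if h : ∃ p ∈ firstAvailC E M' ℓ e.2, (p, e.2) ∈ M' ∧
        ∀ p' ∈ firstAvailC E M' ℓ e.2, w (p', e.2) ≤ w (p, e.2)
    then (h.choose, e.2) else e with hf2
  have hf2spec : ∀ e ∈ M2, f2 e ∈ M' ∧ (f2 e).2 = e.2 ∧ w e ≤ max 1 βℓ * w (f2 e) := by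
    intro e he
    rw [hM2, Finset.mem_filter] at he
    obtain ⟨heM, hep⟩ := he
    have hEe : (e.1, e.2) ∈ E := by rw [Prod.mk.eta]; exact hME heM
    have havail : e.1 ∈ availSetC E M' e.2 := by
      rw [availSetC, Finset.mem_filter]
      refine ⟨Finset.mem_univ _, hEe, ?_⟩
      intro i hi hmem
      exact hep ⟨i, hi, hmem⟩
    have hex := (hgreedy e.2).1 ⟨e.1, havail⟩
    have hval : f2 e = (hex.choose, e.2) := dif_pos hex
    obtain ⟨hpF, hpM', hpmax⟩ := hex.choose_spec
    rw [hval]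
    refine ⟨hpM', rfl, ?_⟩
    have hwp : 0 ≤ w (hex.choose, e.2) := hw' _ hpM'
    have hkey : w (e.1, e.2) ≤ max 1 βℓ * w (hex.choose, e.2) := by
      by_cases hF : e.1 ∈ firstAvailC E M' ℓ e.2
      · calc w (e.1, e.2) ≤ w (hex.choose, e.2) := hpmax e.1 hF
          _ ≤ max 1 βℓ * w (hex.choose, e.2) :=
            le_mul_of_one_le_left hwp (le_max_left 1 βℓ)
      · obtain ⟨p₀, hp₀F, hp₀le⟩ := low_elem hordP havail hF
        calc w (e.1, e.2) ≤ βℓ * w (p₀, e.2) := hp₀le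
          _ ≤ βℓ * w (hex.choose, e.2) :=
            mul_le_mul_of_nonneg_left (hpmax p₀ hp₀F) hβ
          _ ≤ max 1 βℓ * w (hex.choose, e.2) :=
            mul_le_mul_of_nonneg_right (le_max_right 1 βℓ) hwp
    rwa [Prod.mk.eta] at hkey
  have hf2inj : ∀ a ∈ M2, ∀ b ∈ M2, f2 a = f2 b → a = b := by
    intro a ha b hb hab
    by_contra hne
    have h1 := (hf2spec a ha).2.1
    have h2 := (hf2spec b hb).2.1
    have : a.2 = b.2 := by rw [← h1, ← h2, hab]
    rw [hM2, Finset.mem_filter] at ha hb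
    exact (hMm a ha.1 b hb.1 hne).2 this
  have hsum2 : ∑ e ∈ M2, w e ≤ max 1 βℓ * ∑ e ∈ M', w e :=
    charge_le M2 M' w (max 1 βℓ) (le_trans zero_le_one (le_max_left 1 βℓ)) hw' f2
      (fun e he => (hf2spec e he).1) (fun e he => (hf2spec e he).2.2) hf2inj
  have hsplit : ∑ e ∈ M1, w e + ∑ e ∈ M2, w e = ∑ e ∈ M, w e :=
    Finset.sum_filter_add_sum_filter_not M pred w
  have hmax : max (1 + γ) (βℓ + γ) = max 1 βℓ + γ := max_add_add_right 1 βℓ γ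
  rw [hmax]
  calc ∑ e ∈ M, w e = ∑ e ∈ M1, w e + ∑ e ∈ M2, w e := hsplit.symm
    _ ≤ γ * ∑ e ∈ M', w e + max 1 βℓ * ∑ e ∈ M', w e := add_le_add hsum1 hsum2
    _ = (max 1 βℓ + γ) * ∑ e ∈ M', w e := by ring
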